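/- Let X* ∈ F_{n,k} be an optimal solution of min_{X∈F_{n,k}} f(X), and let μ₁ ≥ μ₂ ≥ ... ≥ μ_n denote the eigenvalues of −∇f(X*). Let r be the smallest integer with r ≥ k and μ_k > μ_{r+1}, and fix η > 0. Then for any r' ∈ {r, r+1, ..., n−1} and any X ∈ F_{n,k} with ‖X − X*‖_F ≤ η(μ_k − μ_{r'+1})/(2(1+ηβ)), it holds that rank(Π_{F_{n,k}}[X − η∇f(X)]) ≤ r'. -/

import Mathlib

open Matrix

noncomputable def frobNorm {m : ℕ} (A : Matrix (Fin m) (Fin m) ℝ) : ℝ :=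
  Real.sqrt (∑ i, ∑ j, (A i j) ^ 2)

/-- `eigval A j` is the `j`-th largest eigenvalue (1-indexed) of the symmetric matrix `A`. -/
noncomputable def eigval {m : ℕ} (A : Matrix (Fin m) (Fin m) ℝ) (j : ℕ) : ℝ :=
  if h : A.IsHermitian then
    if hj : m - j < m then (h.eigenvalues ∘ Tuple.sort h.eigenvalues) ⟨m - j, hj⟩ else 0
  else 0

/-- spectral norm: largest singular value. -/
noncomputable def specNorm {m : ℕ} (A : Matrix (Fin m) (Fin m) ℝ) : ℝ :=
  Real.sqrt (eigval (Aᵀ * A) 1)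

/-- `P_{n,k}`: rank-`k` orthogonal projection matrices. -/
def ProjSet (n k : ℕ) : Set (Matrix (Fin n) (Fin n) ℝ) :=
  {X | ∃ Q : Matrix (Fin n) (Fin k) ℝ, Qᵀ * Q = 1 ∧ X = Q * Qᵀ}

/-- The Fantope `F_{n,k}`. -/
def Fantope (n k : ℕ) : Set (Matrix (Fin n) (Fin n) ℝ) :=
  {X | X.IsSymm ∧ X.PosSemidef ∧ (1 - X).PosSemidef ∧ X.trace = (k : ℝ)}

namespace Fan

variable {n : ℕ}

/-- Frobenius inner product. -/
noncomputable def ip (A B : Matrix (Fin n) (Fin n) ℝ) : ℝ := ∑ i, ∑ j, A i j * B i j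

lemma ip_comm (A B : Matrix (Fin n) (Fin n) ℝ) : ip A B = ip B A := by
  unfold ip; congr 1; ext i; congr 1; ext j; ring

lemma ip_self_nonneg (A : Matrix (Fin n) (Fin n) ℝ) : 0 ≤ ip A A := by
  refine Finset.sum_nonneg fun i _ => Finset.sum_nonneg fun j _ => mul_self_nonneg _

lemma frobNorm_eq (A : Matrix (Fin n) (Fin n) ℝ) : frobNorm A = Real.sqrt (ip A A) := by
  unfold frobNorm ip; congr 1; refine Finset.sum_congr rfl fun i _ => Finset.sum_congr rfl fun j _ => (sq (A i j)) ▸ (sq (A i j)).symm ▸ rfl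

lemma frobNorm_nonneg (A : Matrix (Fin n) (Fin n) ℝ) : 0 ≤ frobNorm A :=
  Real.sqrt_nonneg _

lemma frobNorm_sq (A : Matrix (Fin n) (Fin n) ℝ) : frobNorm A ^ 2 = ip A A := by
  rw [frobNorm_eq, Real.sq_sqrt (ip_self_nonneg A)]

lemma ip_add_left (A B C : Matrix (Fin n) (Fin n) ℝ) : ip (A + B) C = ip A C + ip B C := by
  unfold ip; rw [← Finset.sum_add_distrib]
  refine Finset.sum_congr rfl fun i _ => ?_
  rw [← Finset.sum_add_distrib]
  exact Finset.sum_congr rfl fun j _ => by simp [add_mul]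

lemma ip_smul_left (c : ℝ) (A B : Matrix (Fin n) (Fin n) ℝ) : ip (c • A) B = c * ip A B := by
  unfold ip; rw [Finset.mul_sum]
  refine Finset.sum_congr rfl fun i _ => ?_
  rw [Finset.mul_sum]
  exact Finset.sum_congr rfl fun j _ => by simp [mul_assoc]

lemma ip_neg_left (A B : Matrix (Fin n) (Fin n) ℝ) : ip (-A) B = -ip A B := by
  have := ip_smul_left (-1) A B; simpa using this

lemma ip_sub_left (A B C : Matrix (Fin n) (Fin n) ℝ) : ip (A - B) C = ip A C - ip B C := by
  rw [sub_eq_add_neg, ip_add_left, ip_neg_left]; ring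

lemma ip_add_right (A B C : Matrix (Fin n) (Fin n) ℝ) : ip A (B + C) = ip A B + ip A C := by
  rw [ip_comm, ip_add_left, ip_comm B A, ip_comm C A]

lemma ip_sub_right (A B C : Matrix (Fin n) (Fin n) ℝ) : ip A (B - C) = ip A B - ip A C := by
  rw [ip_comm, ip_sub_left, ip_comm B A, ip_comm C A]

lemma ip_smul_right (c : ℝ) (A B : Matrix (Fin n) (Fin n) ℝ) : ip A (c • B) = c * ip A B := by
  rw [ip_comm, ip_smul_left, ip_comm]

/-- Cauchy–Schwarz for the Frobenius inner product. -/
lemma abs_ip_le (A B : Matrix (Fin n) (Fin n) ℝ) : |ip A B| ≤ frobNorm A * frobNorm B := by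
  have h2 : ∀ C : Matrix (Fin n) (Fin n) ℝ, ∀ D : Matrix (Fin n) (Fin n) ℝ,
      ip C D = ∑ p : Fin n × Fin n, C p.1 p.2 * D p.1 p.2 := by
    intro C D; unfold ip; rw [← Finset.sum_product']; rfl
  have key : (ip A B) ^ 2 ≤ (ip A A) * (ip B B) := by
    rw [h2 A B, h2 A A, h2 B B]
    have := Finset.sum_mul_sq_le_sq_mul_sq Finset.univ (fun p : Fin n × Fin n => A p.1 p.2)
      (fun p : Fin n × Fin n => B p.1 p.2)
    have e1 : ∀ C : Matrix (Fin n) (Fin n) ℝ,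
        (∑ p : Fin n × Fin n, C p.1 p.2 * C p.1 p.2) = ∑ p : Fin n × Fin n, C p.1 p.2 ^ 2 := by
      intro C; exact Finset.sum_congr rfl fun p _ => (sq (C p.1 p.2)).symm
    rw [e1 A, e1 B]
    exact this
  have hA := ip_self_nonneg A; have hB := ip_self_nonneg B
  have : |ip A B| ^ 2 ≤ (frobNorm A * frobNorm B) ^ 2 := by
    rw [sq_abs, mul_pow, frobNorm_sq, frobNorm_sq]; exact key
  have hnn : 0 ≤ frobNorm A * frobNorm B := mul_nonneg (frobNorm_nonneg A) (frobNorm_nonneg B)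
  nlinarith [abs_nonneg (ip A B)]

lemma ip_le (A B : Matrix (Fin n) (Fin n) ℝ) : ip A B ≤ frobNorm A * frobNorm B :=
  (le_abs_self _).trans (abs_ip_le A B)

lemma frobNorm_add_le (A B : Matrix (Fin n) (Fin n) ℝ) :
    frobNorm (A + B) ≤ frobNorm A + frobNorm B := by
  have h : frobNorm (A + B) ^ 2 ≤ (frobNorm A + frobNorm B) ^ 2 := by
    rw [frobNorm_sq, ip_add_left, ip_add_right, ip_add_right]
    have := ip_le A B
    have h2 := ip_comm B A
    nlinarith [frobNorm_sq A, frobNorm_sq B]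
  nlinarith [frobNorm_nonneg (A + B), frobNorm_nonneg A, frobNorm_nonneg B]

lemma frobNorm_smul (c : ℝ) (hc : 0 ≤ c) (A : Matrix (Fin n) (Fin n) ℝ) :
    frobNorm (c • A) = c * frobNorm A := by
  rw [frobNorm_eq, frobNorm_eq, ip_smul_left, ip_smul_right, ← mul_assoc,
    Real.sqrt_mul (by positivity), Real.sqrt_mul_self hc]

lemma eq_zero_of_ip_self (A : Matrix (Fin n) (Fin n) ℝ) (h : ip A A ≤ 0) : A = 0 := by
  have h0 : ip A A = 0 := le_antisymm h (ip_self_nonneg A)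
  have hrow : ∀ i ∈ Finset.univ, ∑ j, A i j * A i j = 0 := by
    rw [← Finset.sum_eq_zero_iff_of_nonneg
      (fun i _ => Finset.sum_nonneg fun j _ => mul_self_nonneg (A i j))]
    exact h0
  ext i j
  have hij : ∀ j ∈ Finset.univ, A i j * A i j = 0 := by
    rw [← Finset.sum_eq_zero_iff_of_nonneg (fun j _ => mul_self_nonneg (A i j))]
    exact hrow i (Finset.mem_univ i)
  have := hij j (Finset.mem_univ j)
  have : A i j = 0 := by nlinarith
  simpa using this

section B
variable {n : ℕ}

lemma ip_eq_trace (A B : Matrix (Fin n) (Fin n) ℝ) : ip A B = (Aᵀ * B).trace := by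
  unfold ip
  rw [Matrix.trace]
  rw [Finset.sum_comm]
  refine Finset.sum_congr rfl fun j _ => ?_
  simp [Matrix.diag, Matrix.mul_apply, Matrix.transpose_apply]

lemma trace_mul_eq_ip {G : Matrix (Fin n) (Fin n) ℝ} (hG : G.IsSymm)
    (M : Matrix (Fin n) (Fin n) ℝ) : (G * M).trace = ip G M := by
  rw [ip_eq_trace, hG.eq]

lemma qf_eq_ip (E : Matrix (Fin n) (Fin n) ℝ) (v : Fin n → ℝ) :
    v ⬝ᵥ (E *ᵥ v) = ip E (Matrix.vecMulVec v v) := by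
  unfold ip
  rw [dotProduct]
  refine Finset.sum_congr rfl fun i _ => ?_
  rw [Matrix.mulVec, dotProduct, Finset.mul_sum]
  refine Finset.sum_congr rfl fun j _ => ?_
  simp [Matrix.vecMulVec_apply]; ring

lemma frobNorm_vecMulVec (v : Fin n → ℝ) : frobNorm (Matrix.vecMulVec v v) = v ⬝ᵥ v := by
  rw [frobNorm_eq]
  have : ip (Matrix.vecMulVec v v) (Matrix.vecMulVec v v) = (v ⬝ᵥ v) * (v ⬝ᵥ v) := by
    unfold ip
    simp only [dotProduct, Finset.sum_mul, Finset.mul_sum]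
    refine Finset.sum_congr rfl fun i _ => Finset.sum_congr rfl fun j _ => ?_
    simp [Matrix.vecMulVec_apply]; ring
  have hnn : 0 ≤ v ⬝ᵥ v := Finset.sum_nonneg fun i _ => mul_self_nonneg (v i)
  rw [this, Real.sqrt_mul_self hnn]

lemma abs_qf_le (E : Matrix (Fin n) (Fin n) ℝ) (v : Fin n → ℝ) :
    |v ⬝ᵥ (E *ᵥ v)| ≤ frobNorm E * (v ⬝ᵥ v) := by
  rw [qf_eq_ip, ← frobNorm_vecMulVec v]
  exact abs_ip_le E _

lemma psd_qf {Z : Matrix (Fin n) (Fin n) ℝ} (hZ : Z.PosSemidef) (v : Fin n → ℝ) :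
    0 ≤ v ⬝ᵥ (Z *ᵥ v) := by
  have := hZ.dotProduct_mulVec_nonneg v
  simpa using this

lemma psd_of_qf {Z : Matrix (Fin n) (Fin n) ℝ} (hZ : Z.IsSymm)
    (h : ∀ v : Fin n → ℝ, 0 ≤ v ⬝ᵥ (Z *ᵥ v)) : Z.PosSemidef := by
  refine Matrix.PosSemidef.of_dotProduct_mulVec_nonneg ?_ ?_
  · rw [Matrix.IsHermitian, Matrix.conjTranspose_eq_transpose_of_trivial, hZ.eq]
  · intro x; simpa using h x

section Orth

variable {U : Matrix (Fin n) (Fin n) ℝ} (hU : Uᵀ * U = 1)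

include hU

lemma orth_mul_self : U * Uᵀ = 1 := mul_eq_one_comm.mp hU

lemma orth_recover (v : Fin n → ℝ) : U *ᵥ (Uᵀ *ᵥ v) = v := by
  rw [Matrix.mulVec_mulVec, orth_mul_self hU, Matrix.one_mulVec]

lemma orth_dot (v w : Fin n → ℝ) : (Uᵀ *ᵥ v) ⬝ᵥ (Uᵀ *ᵥ w) = v ⬝ᵥ w := by
  rw [Matrix.dotProduct_mulVec, Matrix.vecMul_transpose, orth_recover hU]

lemma orth_coord_ne_zero {v : Fin n → ℝ} (hv : v ≠ 0) : Uᵀ *ᵥ v ≠ 0 := by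
  intro h
  apply hv
  have := orth_recover hU v
  rw [h, Matrix.mulVec_zero] at this
  exact this.symm

lemma dot_mulVec_left (v w : Fin n → ℝ) : v ⬝ᵥ (U *ᵥ w) = (Uᵀ *ᵥ v) ⬝ᵥ w := by
  rw [Matrix.dotProduct_mulVec, Matrix.mulVec_transpose]

/-- Quadratic form of `U * diagonal d * Uᵀ` in coordinates. -/
lemma qf_spec (d : Fin n → ℝ) (v : Fin n → ℝ) :
    v ⬝ᵥ ((U * Matrix.diagonal d * Uᵀ) *ᵥ v) = ∑ a, d a * (Uᵀ *ᵥ v) a ^ 2 := by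
  rw [← Matrix.mulVec_mulVec, ← Matrix.mulVec_mulVec, dot_mulVec_left hU]
  rw [dotProduct]
  refine Finset.sum_congr rfl fun a _ => ?_
  rw [Matrix.mulVec_diagonal]
  ring

lemma dot_self_coord (v : Fin n → ℝ) : v ⬝ᵥ v = ∑ a, (Uᵀ *ᵥ v) a ^ 2 := by
  rw [← orth_dot hU v v, dotProduct]
  exact Finset.sum_congr rfl fun a _ => (sq _).symm

/-- trace of `B` as sum of basis quadratic forms. -/
lemma trace_conj (B : Matrix (Fin n) (Fin n) ℝ) : (Uᵀ * B * U).trace = B.trace := by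
  rw [Matrix.trace_mul_cycle, orth_mul_self hU, Matrix.one_mul]

lemma ip_spec (d : Fin n → ℝ) (B : Matrix (Fin n) (Fin n) ℝ) :
    ip (U * Matrix.diagonal d * Uᵀ) B = ∑ a, d a * (Uᵀ * B * U) a a := by
  rw [ip_eq_trace]
  have ht : (U * Matrix.diagonal d * Uᵀ)ᵀ = U * Matrix.diagonal d * Uᵀ := by
    simp [Matrix.transpose_mul, Matrix.diagonal_transpose, Matrix.mul_assoc]
  rw [ht]
  have : U * Matrix.diagonal d * Uᵀ * B = U * (Matrix.diagonal d * (Uᵀ * B)) := by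
    simp [Matrix.mul_assoc]
  rw [this, Matrix.trace_mul_comm]
  have e2 : Matrix.diagonal d * (Uᵀ * B) * U = Matrix.diagonal d * (Uᵀ * B * U) := by
    simp [Matrix.mul_assoc]
  rw [e2, Matrix.trace]
  refine Finset.sum_congr rfl fun a _ => ?_
  simp [Matrix.diag, Matrix.diagonal_mul]

lemma conj_diag_qf (B : Matrix (Fin n) (Fin n) ℝ) (a : Fin n) :
    (Uᵀ * B * U) a a = (fun i => U i a) ⬝ᵥ (B *ᵥ (fun i => U i a)) := by
  have e1 : (Uᵀ * B * U) a a = ∑ i, ∑ j, U j a * B j i * U i a := by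
    rw [Matrix.mul_apply]
    refine Finset.sum_congr rfl fun i _ => ?_
    rw [Matrix.mul_apply, Finset.sum_mul]
    refine Finset.sum_congr rfl fun j _ => ?_
    simp [Matrix.transpose_apply]
  rw [e1, Finset.sum_comm]
  simp only [dotProduct, Matrix.mulVec, Finset.mul_sum]
  refine Finset.sum_congr rfl fun j _ => Finset.sum_congr rfl fun i _ => by ring

end Orth
end B

section C
variable {n : ℕ} {A : Matrix (Fin n) (Fin n) ℝ}

lemma isHermitian_of_isSymm (h : A.IsSymm) : A.IsHermitian := by
  rw [Matrix.IsHermitian, Matrix.conjTranspose_eq_transpose_of_trivial, h.eq]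

/-- Real spectral theorem, packaged. -/
lemma specData (hA : A.IsHermitian) :
    ∃ U : Matrix (Fin n) (Fin n) ℝ, Uᵀ * U = 1 ∧ A = U * Matrix.diagonal hA.eigenvalues * Uᵀ := by
  refine ⟨(hA.eigenvectorUnitary : Matrix (Fin n) (Fin n) ℝ), ?_, ?_⟩
  · have h1 := (Matrix.mem_unitaryGroup_iff'.mp (hA.eigenvectorUnitary).2)
    rw [← Matrix.conjTranspose_eq_transpose_of_trivial]
    exact h1
  · have h2 := hA.spectral_theorem
    rw [RCLike.ofReal_real_eq_id] at h2
    simpa [Matrix.star_eq_conjTranspose, Matrix.conjTranspose_eq_transpose_of_trivial] using h2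

lemma trace_specData {U : Matrix (Fin n) (Fin n) ℝ} (hU : Uᵀ * U = 1) (d : Fin n → ℝ) :
    (U * Matrix.diagonal d * Uᵀ).trace = ∑ a, d a := by
  rw [Matrix.trace_mul_cycle, hU, Matrix.one_mul, Matrix.trace_diagonal]

lemma eigval_eq (hA : A.IsHermitian) {j : ℕ} (hj1 : 1 ≤ j) (hjn : j ≤ n) :
    eigval A j = hA.eigenvalues (Tuple.sort hA.eigenvalues ⟨n - j, by omega⟩) := by
  unfold eigval
  rw [dif_pos hA, dif_pos (show n - j < n by omega)]
  rfl

lemma card_fin_ge (c : ℕ) (hc : c ≤ n) :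
    (Finset.univ.filter fun p : Fin n => c ≤ (p : ℕ)).card = n - c := by
  classical
  rw [Finset.card_bij' (i := fun (p : Fin n) _ => (p : ℕ) - c)
      (j := fun (m : ℕ) hm => (⟨m + c, by
        have := Finset.mem_range.mp hm; omega⟩ : Fin n)) (t := Finset.range (n - c))]
  · exact Finset.card_range _
  · intro p hp
    have := (Finset.mem_filter.mp hp).2
    have := p.isLt
    simp only [Finset.mem_range]
    omega
  · intro m hm
    have := Finset.mem_range.mp hm
    simp only [Finset.mem_filter, Finset.mem_univ, true_and]
    omega
  · intro p hp
    have := (Finset.mem_filter.mp hp).2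
    ext
    simp
    omega
  · intro m hm
    simp

/-- at least `j` eigenvalues are `≥` the `j`-th largest -/
lemma count_ge_eigval (hA : A.IsHermitian) {j : ℕ} (hj1 : 1 ≤ j) (hjn : j ≤ n) :
    j ≤ (Finset.univ.filter fun a => eigval A j ≤ hA.eigenvalues a).card := by
  classical
  have mono := Tuple.monotone_sort hA.eigenvalues
  have hP : (Finset.univ.filter fun p : Fin n => n - j ≤ (p : ℕ)).card = j := by
    rw [card_fin_ge (n - j) (by omega)]; omega
  have key : (Finset.univ.filter fun p : Fin n => n - j ≤ (p : ℕ)).card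
      ≤ (Finset.univ.filter fun a => eigval A j ≤ hA.eigenvalues a).card := by
    refine Finset.card_le_card_of_injOn (Tuple.sort hA.eigenvalues) ?_
      (Function.Injective.injOn (Equiv.injective _))
    intro p hp
    have hple := (Finset.mem_filter.mp hp).2
    simp only [Finset.coe_filter, Finset.mem_filter, Finset.mem_univ, true_and, Set.mem_setOf_eq]
    rw [eigval_eq hA hj1 hjn]
    have hle : ((⟨n - j, by omega⟩ : Fin n)) ≤ p := by
      rw [Fin.le_def]; simp only [Fin.val_mk]; exact hple
    exact mono hle
  omega

/-- fewer than `j` eigenvalues are `>` the `j`-th largest -/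
lemma count_gt_eigval (hA : A.IsHermitian) {j : ℕ} (hj1 : 1 ≤ j) (hjn : j ≤ n) :
    (Finset.univ.filter fun a => eigval A j < hA.eigenvalues a).card < j := by
  classical
  have mono := Tuple.monotone_sort hA.eigenvalues
  have key : (Finset.univ.filter fun a => eigval A j < hA.eigenvalues a).card
      ≤ (Finset.univ.filter fun p : Fin n => n - j + 1 ≤ (p : ℕ)).card := by
    refine Finset.card_le_card_of_injOn (Tuple.sort hA.eigenvalues).symm ?_
      (Function.Injective.injOn (Equiv.injective _))
    intro a ha
    have hgt := (Finset.mem_filter.mp ha).2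
    simp only [Finset.coe_filter, Finset.mem_filter, Finset.mem_univ, true_and, Set.mem_setOf_eq]
    by_contra hle
    push_neg at hle
    have h1 : ((Tuple.sort hA.eigenvalues).symm a : Fin n) ≤ ⟨n - j, by omega⟩ := by
      rw [Fin.le_def]; simp only [Fin.val_mk]; omega
    have h2 := mono h1
    simp only [Function.comp_apply, Equiv.apply_symm_apply] at h2
    have h3 : hA.eigenvalues a ≤ eigval A j := by
      rw [eigval_eq hA hj1 hjn]; exact h2
    linarith
  have hP := card_fin_ge (n := n) (n - j + 1) (by omega)
  omega

lemma eigval_ge_of_count (hA : A.IsHermitian) {j : ℕ} (hj1 : 1 ≤ j) (hjn : j ≤ n) {t : ℝ}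
    (h : j ≤ (Finset.univ.filter fun a => t ≤ hA.eigenvalues a).card) : t ≤ eigval A j := by
  classical
  by_contra hlt
  push_neg at hlt
  have hsub : (Finset.univ.filter fun a => t ≤ hA.eigenvalues a)
      ⊆ Finset.univ.filter fun a => eigval A j < hA.eigenvalues a := by
    intro a ha
    have := (Finset.mem_filter.mp ha).2
    simp only [Finset.mem_filter, Finset.mem_univ, true_and]
    linarith
  have := Finset.card_le_card hsub
  have := count_gt_eigval hA hj1 hjn
  omega

lemma eigval_antitone (hA : A.IsHermitian) {j j' : ℕ} (hj1 : 1 ≤ j) (hjj : j ≤ j') (hjn : j' ≤ n) :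
    eigval A j' ≤ eigval A j := by
  rw [eigval_eq hA hj1 (by omega), eigval_eq hA (by omega) hjn]
  have mono := Tuple.monotone_sort hA.eigenvalues
  have hle : ((⟨n - j', by omega⟩ : Fin n)) ≤ ⟨n - j, by omega⟩ := by
    rw [Fin.le_def]; simp; omega
  exact mono hle

/-- reindexing a sum over eigenvalues by (1-indexed) sorted position -/
lemma sum_eigval (hA : A.IsHermitian) (φ : ℝ → ℝ) :
    ∑ j ∈ Finset.Icc 1 n, φ (eigval A j) = ∑ a, φ (hA.eigenvalues a) := by
  classical
  have h1 : ∑ a, φ (hA.eigenvalues a)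
      = ∑ p : Fin n, φ (hA.eigenvalues (Tuple.sort hA.eigenvalues p)) :=
    (Equiv.sum_comp (Tuple.sort hA.eigenvalues) (fun a => φ (hA.eigenvalues a))).symm
  rw [h1]
  rw [Finset.sum_bij' (i := fun (j : ℕ) (hj : j ∈ Finset.Icc 1 n) =>
        (⟨n - j, by have := Finset.mem_Icc.mp hj; omega⟩ : Fin n))
      (j := fun (p : Fin n) _ => n - (p : ℕ))]
  · intro j hj
    simp
  · intro p _
    have := p.isLt
    simp only [Finset.mem_Icc]
    omega
  · intro j hj
    have := Finset.mem_Icc.mp hj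
    simp only [Fin.val_mk]
    omega
  · intro p _
    have := p.isLt
    ext
    simp
    omega
  · intro j hj
    have hj' := Finset.mem_Icc.mp hj
    rw [eigval_eq hA hj'.1 hj'.2]

end C

set_option linter.unusedSectionVars false

section D
variable {n k : ℕ} {Z : Matrix (Fin n) (Fin n) ℝ}

lemma mem_qf_nonneg (hZ : Z ∈ Fantope n k) (v : Fin n → ℝ) : 0 ≤ v ⬝ᵥ (Z *ᵥ v) :=
  psd_qf hZ.2.1 v

lemma mem_qf_le (hZ : Z ∈ Fantope n k) (v : Fin n → ℝ) : v ⬝ᵥ (Z *ᵥ v) ≤ v ⬝ᵥ v := by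
  have h := psd_qf hZ.2.2.1 v
  rw [Matrix.sub_mulVec, Matrix.one_mulVec, dotProduct_sub] at h
  linarith

lemma fantope_convex {Z1 Z2 : Matrix (Fin n) (Fin n) ℝ} (h1 : Z1 ∈ Fantope n k)
    (h2 : Z2 ∈ Fantope n k) {t : ℝ} (ht0 : 0 ≤ t) (ht1 : t ≤ 1) :
    (1 - t) • Z1 + t • Z2 ∈ Fantope n k := by
  obtain ⟨h1s, h1p, h1i, h1t⟩ := h1
  obtain ⟨h2s, h2p, h2i, h2t⟩ := h2
  have hqf : ∀ v : Fin n → ℝ, v ⬝ᵥ (((1 - t) • Z1 + t • Z2) *ᵥ v)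
      = (1 - t) * (v ⬝ᵥ (Z1 *ᵥ v)) + t * (v ⬝ᵥ (Z2 *ᵥ v)) := by
    intro v
    rw [Matrix.add_mulVec, dotProduct_add, Matrix.smul_mulVec,
      Matrix.smul_mulVec, dotProduct_smul, dotProduct_smul]
    simp
  have hsymm : ((1 - t) • Z1 + t • Z2).IsSymm := by
    rw [Matrix.IsSymm, Matrix.transpose_add, Matrix.transpose_smul, Matrix.transpose_smul,
      h1s.eq, h2s.eq]
  refine ⟨hsymm, psd_of_qf hsymm fun v => ?_, ?_, ?_⟩
  · rw [hqf]
    have := psd_qf h1p v; have := psd_qf h2p v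
    nlinarith
  · have hsymm2 : ((1:Matrix (Fin n) (Fin n) ℝ) - ((1 - t) • Z1 + t • Z2)).IsSymm := by
      rw [Matrix.IsSymm, Matrix.transpose_sub, Matrix.transpose_one, Matrix.transpose_add,
        Matrix.transpose_smul, Matrix.transpose_smul, h1s.eq, h2s.eq]
    refine psd_of_qf hsymm2 fun v => ?_
    rw [Matrix.sub_mulVec, Matrix.one_mulVec, dotProduct_sub, hqf]
    have ha := mem_qf_le ⟨h1s, h1p, h1i, h1t⟩ v
    have hb := mem_qf_le ⟨h2s, h2p, h2i, h2t⟩ v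
    nlinarith
  · rw [Matrix.trace_add, Matrix.trace_smul, Matrix.trace_smul, h1t, h2t]
    simp; ring

variable {U : Matrix (Fin n) (Fin n) ℝ} (hU : Uᵀ * U = 1)
include hU

lemma diag_one_sub (z : Fin n → ℝ) :
    (1 : Matrix (Fin n) (Fin n) ℝ) - U * Matrix.diagonal z * Uᵀ
      = U * Matrix.diagonal (fun a => 1 - z a) * Uᵀ := by
  have h : Matrix.diagonal (fun a => 1 - z a) = 1 - Matrix.diagonal z := by
    ext i j
    by_cases hij : i = j <;> simp [Matrix.diagonal, Matrix.one_apply, hij]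
  rw [h, Matrix.mul_sub, Matrix.mul_one, Matrix.sub_mul, orth_mul_self hU]

lemma specData_symm (z : Fin n → ℝ) : (U * Matrix.diagonal z * Uᵀ).IsSymm := by
  rw [Matrix.IsSymm, Matrix.transpose_mul, Matrix.transpose_mul, Matrix.transpose_transpose,
    Matrix.diagonal_transpose, Matrix.mul_assoc]

lemma fantope_diag (z : Fin n → ℝ) (hz0 : ∀ a, 0 ≤ z a) (hz1 : ∀ a, z a ≤ 1)
    (hzs : ∑ a, z a = (k : ℝ)) : U * Matrix.diagonal z * Uᵀ ∈ Fantope n k := by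
  refine ⟨specData_symm hU z, psd_of_qf (specData_symm hU z) fun v => ?_, ?_, ?_⟩
  · rw [qf_spec hU]
    exact Finset.sum_nonneg fun a _ => mul_nonneg (hz0 a) (sq_nonneg _)
  · rw [diag_one_sub hU]
    refine psd_of_qf (specData_symm hU _) fun v => ?_
    rw [qf_spec hU]
    refine Finset.sum_nonneg fun a _ => mul_nonneg (by linarith [hz1 a]) (sq_nonneg _)
  · rw [trace_specData hU, hzs]

lemma col_dot_col (a : Fin n) : (fun i => U i a) ⬝ᵥ (fun i => U i a) = 1 := by
  have h : (Uᵀ * U) a a = (fun i => U i a) ⬝ᵥ (fun i => U i a) := by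
    rw [Matrix.mul_apply, dotProduct]
    exact Finset.sum_congr rfl fun i _ => by simp [Matrix.transpose_apply]
  rw [← h, hU]
  simp

lemma fantope_coord_nonneg (hZ : Z ∈ Fantope n k) (a : Fin n) : 0 ≤ (Uᵀ * Z * U) a a := by
  rw [conj_diag_qf hU]
  exact mem_qf_nonneg hZ _

lemma fantope_coord_le_one (hZ : Z ∈ Fantope n k) (a : Fin n) : (Uᵀ * Z * U) a a ≤ 1 := by
  rw [conj_diag_qf hU]
  calc (fun i => U i a) ⬝ᵥ (Z *ᵥ fun i => U i a) ≤ (fun i => U i a) ⬝ᵥ (fun i => U i a) :=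
        mem_qf_le hZ _
  _ = 1 := col_dot_col hU a

lemma fantope_coord_sum (hZ : Z ∈ Fantope n k) : ∑ a, (Uᵀ * Z * U) a a = (k : ℝ) := by
  have : ∑ a, (Uᵀ * Z * U) a a = (Uᵀ * Z * U).trace := rfl
  rw [this, trace_conj hU, hZ.2.2.2]

lemma conj_specData (z : Fin n → ℝ) : Uᵀ * (U * Matrix.diagonal z * Uᵀ) * U = Matrix.diagonal z := by
  have h2 := orth_mul_self hU
  calc Uᵀ * (U * Matrix.diagonal z * Uᵀ) * U
      = (Uᵀ * U) * Matrix.diagonal z * (Uᵀ * U) := by simp only [Matrix.mul_assoc]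
  _ = Matrix.diagonal z := by rw [hU]; simp

/-- eigen-coefficients of a Fantope member are in [0,1] and sum to k -/
lemma fantope_specData_bounds {z : Fin n → ℝ} (hzd : Z = U * Matrix.diagonal z * Uᵀ)
    (hZ : Z ∈ Fantope n k) : (∀ a, 0 ≤ z a ∧ z a ≤ 1) ∧ ∑ a, z a = (k : ℝ) := by
  have hdg : ∀ a, (Uᵀ * Z * U) a a = z a := by
    intro a; rw [hzd, conj_specData hU]; simp
  constructor
  · intro a
    constructor
    · rw [← hdg a]; exact fantope_coord_nonneg hU hZ a
    · rw [← hdg a]; exact fantope_coord_le_one hU hZ a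
  · have := fantope_coord_sum hU hZ
    calc ∑ a, z a = ∑ a, (Uᵀ * Z * U) a a := Finset.sum_congr rfl fun a _ => (hdg a).symm
    _ = (k : ℝ) := this

end D

section E

variable {n : ℕ}

lemma exists_ne_zero_constraints (B C : Matrix (Fin n) (Fin n) ℝ) (S T : Finset (Fin n))
    (h : S.card + T.card < n) :
    ∃ v : Fin n → ℝ, v ≠ 0 ∧ (∀ a ∈ S, (B *ᵥ v) a = 0) ∧ (∀ b ∈ T, (C *ᵥ v) b = 0) := by
  classical
  let φ : (Fin n → ℝ) →ₗ[ℝ] ({x // x ∈ S} → ℝ) × ({x // x ∈ T} → ℝ) :=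
    LinearMap.prod
      ((LinearMap.funLeft ℝ ℝ (Subtype.val : {x // x ∈ S} → Fin n)).comp B.mulVecLin)
      ((LinearMap.funLeft ℝ ℝ (Subtype.val : {x // x ∈ T} → Fin n)).comp C.mulVecLin)
  have hker : LinearMap.ker φ ≠ ⊥ := by
    apply LinearMap.ker_ne_bot_of_finrank_lt
    rw [Module.finrank_prod]
    have e1 : Module.finrank ℝ ({x // x ∈ S} → ℝ) = S.card := by
      rw [Module.finrank_pi]; exact Fintype.card_coe S
    have e2 : Module.finrank ℝ ({x // x ∈ T} → ℝ) = T.card := by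
      rw [Module.finrank_pi]; exact Fintype.card_coe T
    have e3 : Module.finrank ℝ (Fin n → ℝ) = n := by
      rw [Module.finrank_pi]; exact Fintype.card_fin n
    omega
  obtain ⟨v, hv, hvne⟩ := Submodule.ne_bot_iff _ |>.mp hker
  refine ⟨v, hvne, ?_, ?_⟩
  · intro a ha
    have := congr_fun (congr_arg Prod.fst (LinearMap.mem_ker.mp hv)) ⟨a, ha⟩
    simpa [φ, LinearMap.funLeft] using this
  · intro b hb
    have := congr_fun (congr_arg Prod.snd (LinearMap.mem_ker.mp hv)) ⟨b, hb⟩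
    simpa [φ, LinearMap.funLeft] using this

end E

section F

variable {n : ℕ} {V : Matrix (Fin n) (Fin n) ℝ} (hV : Vᵀ * V = 1)
include hV

/-- If the quadratic form of `W = V diag(d) Vᵀ` is `≤ t` on a subspace cut out by `n - |A|`
linear conditions, then few eigenvalues exceed `t`. -/
lemma qcount_le (d : Fin n → ℝ) (C : Matrix (Fin n) (Fin n) ℝ) (A : Finset (Fin n)) (t : ℝ)
    (hq : ∀ v : Fin n → ℝ, (∀ b ∉ A, (C *ᵥ v) b = 0) →
      v ⬝ᵥ ((V * Matrix.diagonal d * Vᵀ) *ᵥ v) ≤ t * (v ⬝ᵥ v)) :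
    A.card + (Finset.univ.filter fun a => t < d a).card ≤ n := by
  classical
  by_contra hcon
  push_neg at hcon
  set Sgt := Finset.univ.filter fun a => t < d a with hSgt
  obtain ⟨v, hvne, hv1, hv2⟩ := exists_ne_zero_constraints Vᵀ C Sgtᶜ Aᶜ (by
    have h1 : Sgtᶜ.card = n - Sgt.card := by
      rw [Finset.card_compl]; simp
    have h2 : Aᶜ.card = n - A.card := by
      rw [Finset.card_compl]; simp
    have h3 : Sgt.card ≤ n := Finset.card_le_card (Finset.subset_univ _) |>.trans (by simp)
    have h4 : A.card ≤ n := Finset.card_le_card (Finset.subset_univ _) |>.trans (by simp)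
    omega)
  have hCv : ∀ b ∉ A, (C *ᵥ v) b = 0 := fun b hb => hv2 b (Finset.mem_compl.mpr hb)
  have hc0 : ∀ a ∉ Sgt, (Vᵀ *ᵥ v) a = 0 := fun a ha => hv1 a (Finset.mem_compl.mpr ha)
  have hq' := hq v hCv
  rw [qf_spec hV, dot_self_coord hV] at hq'
  set c := Vᵀ *ᵥ v with hc
  have key : ∑ a, (d a - t) * c a ^ 2 ≤ 0 := by
    have : ∑ a, (d a - t) * c a ^ 2 = (∑ a, d a * c a ^ 2) - t * ∑ a, c a ^ 2 := by
      rw [Finset.mul_sum, ← Finset.sum_sub_distrib]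
      exact Finset.sum_congr rfl fun a _ => by ring
    rw [this]
    linarith
  have hnn : ∀ a ∈ Finset.univ, 0 ≤ (d a - t) * c a ^ 2 := by
    intro a _
    by_cases ha : a ∈ Sgt
    · have := (Finset.mem_filter.mp ha).2
      exact mul_nonneg (by linarith) (sq_nonneg _)
    · rw [hc0 a ha]; simp
  have hall := (Finset.sum_eq_zero_iff_of_nonneg hnn).mp
    (le_antisymm key (Finset.sum_nonneg hnn))
  have hczero : c = 0 := by
    funext a
    by_cases ha : a ∈ Sgt
    · have h1 := hall a (Finset.mem_univ a)
      have h2 := (Finset.mem_filter.mp ha).2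
      have : c a ^ 2 = 0 := by
        rcases mul_eq_zero.mp h1 with h | h
        · exfalso; linarith
        · exact h
      simpa using pow_eq_zero_iff (n := 2) (by norm_num) |>.mp this
    · exact hc0 a ha
  exact orth_coord_ne_zero hV hvne hczero

lemma qcount_ge (d : Fin n → ℝ) (C : Matrix (Fin n) (Fin n) ℝ) (A : Finset (Fin n)) (t : ℝ)
    (hq : ∀ v : Fin n → ℝ, (∀ b ∉ A, (C *ᵥ v) b = 0) →
      t * (v ⬝ᵥ v) ≤ v ⬝ᵥ ((V * Matrix.diagonal d * Vᵀ) *ᵥ v)) :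
    A.card ≤ (Finset.univ.filter fun a => t ≤ d a).card := by
  classical
  have hneg : ∀ v : Fin n → ℝ, (∀ b ∉ A, (C *ᵥ v) b = 0) →
      v ⬝ᵥ ((V * Matrix.diagonal (fun a => -d a) * Vᵀ) *ᵥ v) ≤ (-t) * (v ⬝ᵥ v) := by
    intro v hv
    have h1 := hq v hv
    rw [qf_spec hV] at h1 ⊢
    have : ∑ a, (fun a => -d a) a * (Vᵀ *ᵥ v) a ^ 2 = -∑ a, d a * (Vᵀ *ᵥ v) a ^ 2 := by
      rw [← Finset.sum_neg_distrib]
      exact Finset.sum_congr rfl fun a _ => by ring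
    rw [this]
    linarith
  have h2 := qcount_le hV (fun a => -d a) C A (-t) hneg
  have h3 : (Finset.univ.filter fun a => -t < -d a) = Finset.univ.filter fun a => d a < t := by
    refine Finset.filter_congr fun a _ => by constructor <;> intro h <;> linarith
  rw [h3] at h2
  have h4 := Finset.card_filter_add_card_filter_not
    (s := (Finset.univ : Finset (Fin n))) (p := fun a => d a < t)
  simp only [not_lt, Finset.card_univ, Fintype.card_fin] at h4
  omega

end F

section G

noncomputable def clip (x : ℝ) : ℝ := max 0 (min 1 x)

lemma clip_nonneg (x : ℝ) : 0 ≤ clip x := le_max_left _ _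

lemma clip_le_one (x : ℝ) : clip x ≤ 1 := by
  unfold clip
  rcases le_total 1 x with h | h
  · simp [min_eq_left h]
  · rcases le_total 0 x with h0 | h0 <;> simp [min_eq_right h] <;> linarith

lemma clip_mono : Monotone clip := fun x y hxy =>
  max_le_max le_rfl (min_le_min le_rfl hxy)

lemma clip_of_nonpos {x : ℝ} (h : x ≤ 0) : clip x = 0 := by
  unfold clip
  rw [min_eq_right (by linarith), max_eq_left h]

lemma clip_pos_arg {x : ℝ} (h : clip x ≠ 0) : 0 < x := by
  by_contra hc
  push_neg at hc
  exact h (clip_of_nonpos hc)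

lemma clip_ge {q x : ℝ} (hq0 : 0 ≤ q) (hq1 : q ≤ 1) (h : q ≤ x) : q ≤ clip x := by
  unfold clip
  rcases le_total 1 x with h1 | h1
  · rw [min_eq_left h1]; exact le_max_of_le_right hq1
  · rw [min_eq_right h1]; exact le_max_of_le_right h

lemma clip_eq_self {x : ℝ} (h0 : 0 ≤ x) (h1 : x ≤ 1) : clip x = x := by
  unfold clip
  rw [min_eq_right h1, max_eq_right h0]

lemma clip_of_ge_one {x : ℝ} (h : 1 ≤ x) : clip x = 1 := by
  unfold clip
  rw [min_eq_left h, max_eq_right zero_le_one]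

lemma continuous_clip : Continuous clip :=
  continuous_const.max (continuous_const.min continuous_id)

lemma exists_theta {n : ℕ} (hn : 0 < n) (d : Fin n → ℝ) (k : ℕ) (hk : k ≤ n) :
    ∃ θ : ℝ, ∑ a, clip (d a - θ) = (k : ℝ) := by
  have : Nonempty (Fin n) := ⟨⟨0, hn⟩⟩
  classical
  obtain ⟨amin, _, hamin⟩ := Finset.exists_min_image Finset.univ d Finset.univ_nonempty
  obtain ⟨amax, _, hamax⟩ := Finset.exists_max_image Finset.univ d Finset.univ_nonempty
  set θ₀ := d amin - 1 with hθ₀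
  set θ₁ := d amax with hθ₁
  have hθle : θ₀ ≤ θ₁ := by
    have := hamin amax (Finset.mem_univ _)
    simp only [hθ₀, hθ₁]
    linarith
  have hcont : ContinuousOn (fun θ : ℝ => ∑ a, clip (d a - θ)) (Set.Icc θ₀ θ₁) := by
    apply Continuous.continuousOn
    exact continuous_finset_sum _ fun a _ => continuous_clip.comp (continuous_const.sub continuous_id)
  have h0 : (fun θ : ℝ => ∑ a, clip (d a - θ)) θ₀ = n := by
    simp only
    have : ∀ a ∈ Finset.univ, clip (d a - θ₀) = 1 := by
      intro a _
      apply clip_of_ge_one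
      have := hamin a (Finset.mem_univ a)
      simp only [hθ₀]
      linarith
    rw [Finset.sum_congr rfl this]
    simp
  have h1 : (fun θ : ℝ => ∑ a, clip (d a - θ)) θ₁ = 0 := by
    simp only
    have : ∀ a ∈ Finset.univ, clip (d a - θ₁) = 0 := by
      intro a _
      apply clip_of_nonpos
      have := hamax a (Finset.mem_univ a)
      simp only [hθ₁]
      linarith
    rw [Finset.sum_congr rfl this]
    simp
  have hmem : (k : ℝ) ∈ Set.Icc ((fun θ : ℝ => ∑ a, clip (d a - θ)) θ₁)
      ((fun θ : ℝ => ∑ a, clip (d a - θ)) θ₀) := by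
    rw [h0, h1]
    constructor
    · exact_mod_cast Nat.zero_le k
    · exact_mod_cast hk
  have := intermediate_value_Icc' hθle hcont hmem
  obtain ⟨θ, _, hθ⟩ := this
  exact ⟨θ, hθ⟩

lemma nonneg_of_forall_small {c b : ℝ} (h : ∀ t : ℝ, 0 < t → t ≤ 1 → 0 ≤ c + t * b) : 0 ≤ c := by
  by_contra hc
  push_neg at hc
  rcases le_total b 0 with hb | hb
  · have := h 1 one_pos le_rfl
    nlinarith
  · have hb' : 0 < b := by
      rcases lt_or_eq_of_le hb with h' | h'
      · exact h'
      · exfalso; have := h 1 one_pos le_rfl; rw [← h'] at this; nlinarith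
    set t := min 1 (-c / (2 * b)) with ht
    have ht0 : 0 < t := by
      apply lt_min one_pos
      apply div_pos (by linarith) (by linarith)
    have ht1 : t ≤ 1 := min_le_left _ _
    have := h t ht0 ht1
    have htle : t ≤ -c / (2 * b) := min_le_right _ _
    have : t * b ≤ (-c / (2 * b)) * b := by nlinarith
    have hcb : (-c / (2 * b)) * b = -c / 2 := by field_simp
    nlinarith [h t ht0 ht1]

end G

section H
variable {n k : ℕ}

lemma ip_expand_t (A B : Matrix (Fin n) (Fin n) ℝ) (t : ℝ) :
    ip (A + t • B) (A + t • B) = ip A A + 2 * t * ip A B + t ^ 2 * ip B B := by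
  rw [ip_add_left, ip_add_right, ip_add_right, ip_smul_left, ip_smul_right, ip_smul_left,
    ip_smul_right, ip_comm B A]
  ring

/-- the metric projection onto the Fantope satisfies the variational inequality -/
lemma proj_vi {W P : Matrix (Fin n) (Fin n) ℝ} (hP : P ∈ Fantope n k)
    (hmin : ∀ Z ∈ Fantope n k, frobNorm (P - W) ≤ frobNorm (Z - W)) :
    ∀ Z ∈ Fantope n k, 0 ≤ ip (P - W) (Z - P) := by
  intro Z hZ
  have key : ∀ t : ℝ, 0 < t → t ≤ 1 → 0 ≤ 2 * ip (P - W) (Z - P) + t * ip (Z - P) (Z - P) := by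
    intro t ht0 ht1
    have hZt : (1 - t) • P + t • Z ∈ Fantope n k := fantope_convex hP hZ (le_of_lt ht0) ht1
    have hm := hmin _ hZt
    have hsq : ip (P - W) (P - W) ≤ ip ((1 - t) • P + t • Z - W) ((1 - t) • P + t • Z - W) := by
      rw [← frobNorm_sq, ← frobNorm_sq]
      exact pow_le_pow_left₀ (frobNorm_nonneg _) hm 2
    have hid : (1 - t) • P + t • Z - W = (P - W) + t • (Z - P) := by module
    rw [hid, ip_expand_t] at hsq
    nlinarith
  have h2 := nonneg_of_forall_small (c := 2 * ip (P - W) (Z - P))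
    (b := ip (Z - P) (Z - P)) (by intro t ht0 ht1; have := key t ht0 ht1; linarith)
  linarith

lemma ip_neg_right (A B : Matrix (Fin n) (Fin n) ℝ) : ip A (-B) = -ip A B := by
  rw [ip_comm, ip_neg_left, ip_comm]

/-- uniqueness: two points of the Fantope both satisfying the VI coincide -/
lemma proj_eq_of_vi {W P1 P2 : Matrix (Fin n) (Fin n) ℝ} (h1 : P1 ∈ Fantope n k)
    (h2 : P2 ∈ Fantope n k) (v1 : ∀ Z ∈ Fantope n k, 0 ≤ ip (P1 - W) (Z - P1))
    (v2 : ∀ Z ∈ Fantope n k, 0 ≤ ip (P2 - W) (Z - P2)) : P1 = P2 := by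
  have a1 := v1 P2 h2
  have a2 := v2 P1 h1
  have e1 : P2 - P1 = -(P1 - P2) := by module
  rw [e1, ip_neg_right] at a1
  have e2 : ip (P2 - W) (P1 - P2) - ip (P1 - W) (P1 - P2) = -ip (P1 - P2) (P1 - P2) := by
    rw [← ip_sub_left]
    have e3 : P2 - W - (P1 - W) = -(P1 - P2) := by module
    rw [e3, ip_neg_left]
  have hle : ip (P1 - P2) (P1 - P2) ≤ 0 := by linarith
  have := eq_zero_of_ip_self _ hle
  have := sub_eq_zero.mp this
  exact this

variable {V : Matrix (Fin n) (Fin n) ℝ} (hV : Vᵀ * V = 1)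
include hV

lemma diag_sub_conj (p d : Fin n → ℝ) :
    V * Matrix.diagonal p * Vᵀ - V * Matrix.diagonal d * Vᵀ
      = V * Matrix.diagonal (fun a => p a - d a) * Vᵀ := by
  have h : Matrix.diagonal (fun a => p a - d a) = Matrix.diagonal p - Matrix.diagonal d := by
    ext i j
    by_cases hij : i = j <;> simp [Matrix.diagonal, hij]
  rw [h, Matrix.mul_sub, Matrix.sub_mul]

/-- the clipped spectral truncation satisfies the variational inequality -/
lemma cand_vi (d : Fin n → ℝ) (θ : ℝ) (hθ : ∑ a, clip (d a - θ) = (k : ℝ)) :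
    ∀ Z ∈ Fantope n k,
      0 ≤ ip ((V * Matrix.diagonal (fun a => clip (d a - θ)) * Vᵀ)
          - V * Matrix.diagonal d * Vᵀ)
        (Z - (V * Matrix.diagonal (fun a => clip (d a - θ)) * Vᵀ)) := by
  intro Z hZ
  set p := fun a => clip (d a - θ) with hp
  set Pc := V * Matrix.diagonal p * Vᵀ with hPc
  rw [diag_sub_conj hV, ip_spec hV]
  have hconj : ∀ a, (Vᵀ * (Z - Pc) * V) a a = (Vᵀ * Z * V) a a - p a := by
    intro a
    have h1 : Vᵀ * (Z - Pc) * V = Vᵀ * Z * V - Vᵀ * Pc * V := by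
      rw [Matrix.mul_sub, Matrix.sub_mul]
    rw [h1, Matrix.sub_apply, hPc, conj_specData hV]
    simp
  set ζ := fun a => (Vᵀ * Z * V) a a with hζ
  have hζ0 : ∀ a, 0 ≤ ζ a := fun a => fantope_coord_nonneg hV hZ a
  have hζ1 : ∀ a, ζ a ≤ 1 := fun a => fantope_coord_le_one hV hZ a
  have hζs : ∑ a, ζ a = (k : ℝ) := fantope_coord_sum hV hZ
  have hterm : ∀ a ∈ Finset.univ, 0 ≤ (p a - d a + θ) * (ζ a - p a) := by
    intro a _
    rcases le_or_gt (d a - θ) 0 with hx | hx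
    · have hpa : p a = 0 := clip_of_nonpos hx
      rw [hpa]
      have : 0 ≤ -(d a - θ) := by linarith
      have := hζ0 a
      nlinarith
    · rcases le_or_gt (d a - θ) 1 with hx1 | hx1
      · have hpa : p a = d a - θ := clip_eq_self (le_of_lt hx) hx1
        rw [hpa]
        have : d a - θ - d a + θ = 0 := by ring
        nlinarith
      · have hpa : p a = 1 := clip_of_ge_one (le_of_lt hx1)
        rw [hpa]
        have h1 := hζ1 a
        nlinarith
  have hsplit : ∑ a, (p a - d a) * ((Vᵀ * (Z - Pc) * V) a a)
      = (∑ a, (p a - d a + θ) * (ζ a - p a)) - θ * ((∑ a, ζ a) - ∑ a, p a) := by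
    have e : ∀ a : Fin n, (p a - d a) * ((Vᵀ * (Z - Pc) * V) a a)
        = (p a - d a + θ) * (ζ a - p a) - θ * (ζ a - p a) := by
      intro a; rw [hconj a]; ring
    calc ∑ a, (p a - d a) * ((Vᵀ * (Z - Pc) * V) a a)
        = ∑ a, ((p a - d a + θ) * (ζ a - p a) - θ * (ζ a - p a)) :=
          Finset.sum_congr rfl fun a _ => e a
    _ = (∑ a, (p a - d a + θ) * (ζ a - p a)) - θ * ((∑ a, ζ a) - ∑ a, p a) := by
        rw [Finset.sum_sub_distrib]
        congr 1
        rw [mul_sub, Finset.mul_sum, Finset.mul_sum, ← Finset.sum_sub_distrib]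
        exact Finset.sum_congr rfl fun a _ => by ring
  rw [hsplit, hζs]
  have hps : ∑ a, p a = (k : ℝ) := hθ
  rw [hps]
  simp only [sub_self, mul_zero, sub_zero]
  exact Finset.sum_nonneg hterm

lemma rank_diag_le (p : Fin n → ℝ) :
    (V * Matrix.diagonal p * Vᵀ).rank ≤ (Finset.univ.filter fun a => p a ≠ 0).card := by
  classical
  have hdet : IsUnit V.det := by
    have h1 : V.det * Vᵀ.det = 1 := by
      rw [← Matrix.det_mul, orth_mul_self hV, Matrix.det_one]
    exact IsUnit.of_mul_eq_one _ h1
  have hdetT : IsUnit Vᵀ.det := by rw [Matrix.det_transpose]; exact hdet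
  rw [Matrix.rank_mul_eq_left_of_isUnit_det Vᵀ _ hdetT,
    Matrix.rank_mul_eq_right_of_isUnit_det V _ hdet, Matrix.rank_diagonal]
  rw [Fintype.card_subtype]

end H

section I
variable {n k : ℕ}

lemma dot_symm {S : Matrix (Fin n) (Fin n) ℝ} (hS : S.IsSymm) (x y : Fin n → ℝ) :
    (S *ᵥ x) ⬝ᵥ y = x ⬝ᵥ (S *ᵥ y) := by
  rw [Matrix.dotProduct_mulVec x S y, ← Matrix.mulVec_transpose, hS.eq,
    dotProduct_comm]

lemma coord_col (U : Matrix (Fin n) (Fin n) ℝ) (v : Fin n → ℝ) (a : Fin n) :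
    (Uᵀ *ᵥ v) a = (fun i => U i a) ⬝ᵥ v := by
  rw [Matrix.mulVec, dotProduct, dotProduct]
  exact Finset.sum_congr rfl fun i _ => by simp [Matrix.transpose_apply]

lemma mul_col (S U : Matrix (Fin n) (Fin n) ℝ) (i a : Fin n) :
    (S * U) i a = (S *ᵥ (fun j => U j a)) i := by
  rw [Matrix.mul_apply, Matrix.mulVec, dotProduct]

/-- first-order optimality condition (variational inequality) at the optimum -/
lemma vi_opt (f : Matrix (Fin n) (Fin n) ℝ → ℝ)
    (grad : Matrix (Fin n) (Fin n) ℝ → Matrix (Fin n) (Fin n) ℝ)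
    (β : ℝ) (hβ : 0 < β)
    (hgradSymm : ∀ X : Matrix (Fin n) (Fin n) ℝ, (grad X).IsSymm)
    (hconv : ∀ X Y : Matrix (Fin n) (Fin n) ℝ, X.IsSymm → Y.IsSymm →
      f X + (grad X * (Y - X)).trace ≤ f Y)
    (hsmooth : ∀ X Y : Matrix (Fin n) (Fin n) ℝ, X.IsSymm → Y.IsSymm →
      frobNorm (grad X - grad Y) ≤ β * frobNorm (X - Y))
    (Xstar : Matrix (Fin n) (Fin n) ℝ) (hmem : Xstar ∈ Fantope n k)
    (hopt : ∀ X ∈ Fantope n k, f Xstar ≤ f X) :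
    ∀ Z ∈ Fantope n k, 0 ≤ ip (grad Xstar) (Z - Xstar) := by
  intro Z hZ
  apply nonneg_of_forall_small (b := β * frobNorm (Z - Xstar) ^ 2)
  intro t ht0 ht1
  set Xt := (1 - t) • Xstar + t • Z with hXtdef
  have hXtF : Xt ∈ Fantope n k := fantope_convex hmem hZ (le_of_lt ht0) ht1
  have h0 : f Xstar ≤ f Xt := hopt _ hXtF
  have h1 := hconv Xt Xstar hXtF.1 hmem.1
  have h2 : ip (grad Xt) (Xstar - Xt) ≤ 0 := by
    rw [← trace_mul_eq_ip (hgradSymm Xt)]; linarith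
  have hXtXs : Xt - Xstar = t • (Z - Xstar) := by rw [hXtdef]; module
  have h3 : 0 ≤ ip (grad Xt) (Xt - Xstar) := by
    have hneg : Xstar - Xt = -(Xt - Xstar) := by module
    rw [hneg, ip_neg_right] at h2; linarith
  rw [hXtXs, ip_smul_right] at h3
  have h4 : 0 ≤ ip (grad Xt) (Z - Xstar) := nonneg_of_mul_nonneg_right h3 ht0
  have h5 : ip (grad Xt) (Z - Xstar)
      = ip (grad Xstar) (Z - Xstar) + ip (grad Xt - grad Xstar) (Z - Xstar) := by
    rw [ip_sub_left]; ring
  have h6 := abs_ip_le (grad Xt - grad Xstar) (Z - Xstar)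
  have h7 : frobNorm (grad Xt - grad Xstar) ≤ β * frobNorm (Xt - Xstar) :=
    hsmooth _ _ hXtF.1 hmem.1
  have h8 : frobNorm (Xt - Xstar) = t * frobNorm (Z - Xstar) := by
    rw [hXtXs, frobNorm_smul t (le_of_lt ht0)]
  have h9 : ip (grad Xt - grad Xstar) (Z - Xstar)
      ≤ t * (β * frobNorm (Z - Xstar) ^ 2) := by
    have ha := (le_abs_self (ip (grad Xt - grad Xstar) (Z - Xstar))).trans h6
    have hb : frobNorm (grad Xt - grad Xstar) * frobNorm (Z - Xstar)
        ≤ t * (β * frobNorm (Z - Xstar) ^ 2) := by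
      rw [h8] at h7
      have hc := frobNorm_nonneg (Z - Xstar)
      have hd := frobNorm_nonneg (grad Xt - grad Xstar)
      nlinarith
    linarith
  linarith

/-- If `μ a` is below the `k`-th largest eigenvalue of `M`, then the optimum kills
the corresponding eigenvector. -/
lemma kernel_lemma (hk1 : 1 ≤ k) (hkn : k ≤ n)
    {M Xstar U : Matrix (Fin n) (Fin n) ℝ} (hU : Uᵀ * U = 1)
    (hMh : M.IsHermitian) (hM : M = U * Matrix.diagonal hMh.eigenvalues * Uᵀ)
    (hXs : Xstar ∈ Fantope n k)
    (hVIM : ∀ Z ∈ Fantope n k, ip M (Z - Xstar) ≤ 0) :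
    ∀ a, hMh.eigenvalues a < eigval M k → Xstar *ᵥ (fun i => U i a) = 0 := by
  classical
  intro a ha
  set μ := hMh.eigenvalues with hμ
  set z := fun c => (Uᵀ * Xstar * U) c c with hz
  have hz0 : ∀ c, 0 ≤ z c := fun c => fantope_coord_nonneg hU hXs c
  have hz1 : ∀ c, z c ≤ 1 := fun c => fantope_coord_le_one hU hXs c
  have hzs : ∑ c, z c = (k : ℝ) := fantope_coord_sum hU hXs
  -- reduce to z a = 0
  suffices hza : z a = 0 by
    have hq : (fun i => U i a) ⬝ᵥ (Xstar *ᵥ (fun i => U i a)) = 0 := by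
      rw [← conj_diag_qf hU]; exact hza
    have := (hXs.2.1.dotProduct_mulVec_zero_iff (fun i => U i a)).mp (by
      simpa using hq)
    exact this
  by_contra hza
  have hzapos : 0 < z a := lt_of_le_of_ne (hz0 a) (Ne.symm hza)
  set A := Finset.univ.filter fun c => eigval M k ≤ μ c with hA
  have hAcard : k ≤ A.card := count_ge_eigval hMh hk1 hkn
  have haA : a ∉ A := by
    simp only [hA, Finset.mem_filter, Finset.mem_univ, true_and, not_le]
    exact ha
  -- find b ∈ A with z b < 1
  have hEx : ∃ b ∈ A, z b < 1 := by
    by_contra hno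
    push_neg at hno
    have hsum1 : (k : ℝ) ≤ ∑ c ∈ A, z c := by
      calc (k : ℝ) ≤ (A.card : ℝ) := by exact_mod_cast hAcard
      _ = ∑ _c ∈ A, (1 : ℝ) := by simp
      _ ≤ ∑ c ∈ A, z c := Finset.sum_le_sum fun c hc => hno c hc
    have hins : ∑ c ∈ insert a A, z c ≤ ∑ c, z c := by
      apply Finset.sum_le_sum_of_subset_of_nonneg (Finset.subset_univ _)
      intro c _ _
      exact hz0 c
    rw [Finset.sum_insert haA, hzs] at hins
    linarith
  obtain ⟨b, hbA, hzb⟩ := hEx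
  have hμb : eigval M k ≤ μ b := (Finset.mem_filter.mp hbA).2
  have hba : b ≠ a := by
    intro h
    rw [h] at hμb
    linarith
  set ε := min (z a) (1 - z b) with hε
  have hεpos : 0 < ε := lt_min hzapos (by linarith)
  set δf := fun c => (if c = b then (1 : ℝ) else 0) - (if c = a then (1 : ℝ) else 0) with hδf
  set z' := fun c => z c + ε * δf c with hz'
  have hz'0 : ∀ c, 0 ≤ z' c := by
    intro c
    by_cases hcb : c = b
    · subst hcb
      simp only [hz', hδf, if_true]
      rw [if_neg hba]
      have := hz0 c
      nlinarith
    · by_cases hca : c = a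
      · subst hca
        simp only [hz', hδf, if_true]
        rw [if_neg hcb]
        have : ε ≤ z c := min_le_left _ _
        nlinarith
      · simp only [hz', hδf]
        rw [if_neg hcb, if_neg hca]
        have := hz0 c
        nlinarith [hz0 c]
  have hz'1 : ∀ c, z' c ≤ 1 := by
    intro c
    by_cases hcb : c = b
    · subst hcb
      simp only [hz', hδf, if_true]
      rw [if_neg hba]
      have : ε ≤ 1 - z c := min_le_right _ _
      nlinarith
    · by_cases hca : c = a
      · subst hca
        simp only [hz', hδf, if_true]
        rw [if_neg hcb]
        have := hz1 c
        nlinarith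
      · simp only [hz', hδf]
        rw [if_neg hcb, if_neg hca]
        have := hz1 c
        nlinarith
  have hsumδ : ∑ c, δf c = 0 := by
    simp only [hδf]
    rw [Finset.sum_sub_distrib]
    simp [Finset.sum_ite_eq']
  have hz's : ∑ c, z' c = (k : ℝ) := by
    simp only [hz']
    rw [Finset.sum_add_distrib, hzs, ← Finset.mul_sum, hsumδ]
    ring
  set Z' := U * Matrix.diagonal z' * Uᵀ with hZ'
  have hZ'F : Z' ∈ Fantope n k := fantope_diag hU z' hz'0 hz'1 hz's
  have hVI := hVIM Z' hZ'F
  have hipZ' : ip M Z' = ∑ c, μ c * z' c := by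
    rw [hM, ip_spec hU]
    refine Finset.sum_congr rfl fun c _ => ?_
    rw [hZ', conj_specData hU]
    simp
  have hipXs : ip M Xstar = ∑ c, μ c * z c := by
    rw [hM, ip_spec hU]
  have hdiffsum : ip M (Z' - Xstar) = ε * (μ b - μ a) := by
    rw [ip_sub_right, hipZ', hipXs]
    have : ∑ c, μ c * z' c - ∑ c, μ c * z c = ∑ c, μ c * (ε * δf c) := by
      rw [← Finset.sum_sub_distrib]
      refine Finset.sum_congr rfl fun c _ => by simp only [hz']; ring
    rw [this]
    have : ∑ c, μ c * (ε * δf c)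
        = ε * ((∑ c, (if c = b then μ c else 0)) - ∑ c, (if c = a then μ c else 0)) := by
      rw [mul_sub, Finset.mul_sum, Finset.mul_sum, ← Finset.sum_sub_distrib]
      refine Finset.sum_congr rfl fun c _ => ?_
      simp only [hδf]
      by_cases hcb : c = b <;> by_cases hca : c = a <;> simp [hcb, hca, hba, Ne.symm hba] <;> ring
    rw [this]
    simp [Finset.sum_ite_eq']
  rw [hdiffsum] at hVI
  have : 0 < ε * (μ b - μ a) := by
    apply mul_pos hεpos
    linarith
  linarith

end I

section J
variable {n k : ℕ}

lemma frobNorm_neg (A : Matrix (Fin n) (Fin n) ℝ) : frobNorm (-A) = frobNorm A := by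
  rw [frobNorm_eq, frobNorm_eq, ip_neg_left, ip_neg_right, neg_neg]

lemma frobNorm_sub_comm (A B : Matrix (Fin n) (Fin n) ℝ) :
    frobNorm (A - B) = frobNorm (B - A) := by
  rw [← frobNorm_neg (A - B), neg_sub]

lemma coordvec {U : Matrix (Fin n) (Fin n) ℝ} (hU : Uᵀ * U = 1) (a : Fin n) :
    Uᵀ *ᵥ (fun i => U i a) = fun b => if b = a then (1 : ℝ) else 0 := by
  funext b
  rw [coord_col]
  have h : (fun i => U i b) ⬝ᵥ (fun i => U i a) = (Uᵀ * U) b a := by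
    rw [Matrix.mul_apply, dotProduct]
    exact Finset.sum_congr rfl fun i _ => by simp [Matrix.transpose_apply]
  rw [h, hU, Matrix.one_apply]

lemma mulVec_col {U : Matrix (Fin n) (Fin n) ℝ} (hU : Uᵀ * U = 1) (d : Fin n → ℝ) (a : Fin n) :
    (U * Matrix.diagonal d * Uᵀ) *ᵥ (fun i => U i a) = d a • (fun i => U i a) := by
  rw [← Matrix.mulVec_mulVec, ← Matrix.mulVec_mulVec, coordvec hU]
  have h1 : Matrix.diagonal d *ᵥ (fun b => if b = a then (1 : ℝ) else 0)
      = fun b => if b = a then d a else 0 := by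
    funext b
    rw [Matrix.mulVec_diagonal]
    by_cases h : b = a <;> simp [h]
  rw [h1]
  funext i
  rw [Matrix.mulVec, dotProduct]
  rw [Finset.sum_congr rfl (fun b _ => show U i b * (if b = a then d a else 0)
    = if b = a then U i b * d a else 0 by by_cases h : b = a <;> simp [h])]
  rw [Finset.sum_ite_eq' Finset.univ a (fun b => U i b * d a)]
  simp [mul_comm]

end J

end Fan

set_option maxHeartbeats 1000000 in
open Fan in
theorem stmt13 {n k : ℕ} (hk : 0 < k) (hkn : k < n)
    (f : Matrix (Fin n) (Fin n) ℝ → ℝ)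
    (grad : Matrix (Fin n) (Fin n) ℝ → Matrix (Fin n) (Fin n) ℝ)
    (β : ℝ) (hβ : 0 < β)
    (hgradSymm : ∀ X : Matrix (Fin n) (Fin n) ℝ, (grad X).IsSymm)
    (hconv : ∀ X Y : Matrix (Fin n) (Fin n) ℝ, X.IsSymm → Y.IsSymm →
      f X + (grad X * (Y - X)).trace ≤ f Y)
    (hsmooth : ∀ X Y : Matrix (Fin n) (Fin n) ℝ, X.IsSymm → Y.IsSymm →
      frobNorm (grad X - grad Y) ≤ β * frobNorm (X - Y))
    (Xstar : Matrix (Fin n) (Fin n) ℝ)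
    (hXstarMem : Xstar ∈ Fantope n k)
    (hXstarOpt : ∀ X ∈ Fantope n k, f Xstar ≤ f X)
    (Pi : Matrix (Fin n) (Fin n) ℝ → Matrix (Fin n) (Fin n) ℝ)
    (hPi : ∀ W : Matrix (Fin n) (Fin n) ℝ, Pi W ∈ Fantope n k ∧
      ∀ Z ∈ Fantope n k, frobNorm (Pi W - W) ≤ frobNorm (Z - W))
    (r : ℕ) (hkr : k ≤ r) (hrn : r < n)
    (hgapr : eigval (-(grad Xstar)) (r + 1) < eigval (-(grad Xstar)) k)
    (hrmin : ∀ j : ℕ, k ≤ j → j < n →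
      eigval (-(grad Xstar)) (j + 1) < eigval (-(grad Xstar)) k → r ≤ j)
    (η : ℝ) (hη : 0 < η) :
    ∀ r' : ℕ, r ≤ r' → r' ≤ n - 1 →
    ∀ X ∈ Fantope n k,
      frobNorm (X - Xstar) ≤
        η * (eigval (-(grad Xstar)) k - eigval (-(grad Xstar)) (r' + 1)) /
          (2 * (1 + η * β)) →
      (Pi (X - η • grad X)).rank ≤ r' := by
  classical
  intro r' hrr' hr'n1 X hXF hdist
  have hn0 : 0 < n := lt_trans hk hkn
  have hkn' : k ≤ n := le_of_lt hkn
  have hr'n : r' + 1 ≤ n := by omega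
  obtain ⟨M, hM0⟩ : ∃ M, M = -(grad Xstar) := ⟨_, rfl⟩
  rw [← hM0] at hgapr hdist
  have hMsymm : M.IsSymm := by
    rw [Matrix.IsSymm, hM0, Matrix.transpose_neg, (hgradSymm Xstar).eq]
  have hMh : M.IsHermitian := isHermitian_of_isSymm hMsymm
  obtain ⟨U, hU, hMdec⟩ := specData hMh
  -- variational inequality at the optimum
  have hVI := vi_opt f grad β hβ hgradSymm hconv hsmooth Xstar hXstarMem hXstarOpt
  have hVIM : ∀ Z ∈ Fantope n k, ip M (Z - Xstar) ≤ 0 := by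
    intro Z hZ
    have h := hVI Z hZ
    rw [hM0, ip_neg_left]
    linarith
  have hker := kernel_lemma hk hkn' hU hMh hMdec hXstarMem hVIM
  -- gap for r'
  have hgap' : eigval M (r' + 1) < eigval M k := by
    calc eigval M (r' + 1) ≤ eigval M (r + 1) :=
          eigval_antitone hMh (by omega) (by omega) (by omega)
    _ < eigval M k := hgapr
  obtain ⟨G, hGdef⟩ : ∃ G, G = eigval M k - eigval M (r' + 1) := ⟨_, rfl⟩
  rw [← hGdef] at hdist
  have hGpos : 0 < G := by rw [hGdef]; linarith
  -- the gradient-step matrices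
  obtain ⟨W, hWdef⟩ : ∃ W, W = X - η • grad X := ⟨_, rfl⟩
  have hWsymm : W.IsSymm := by
    rw [Matrix.IsSymm, hWdef, Matrix.transpose_sub, Matrix.transpose_smul,
      hXF.1.eq, (hgradSymm X).eq]
  have hWh : W.IsHermitian := isHermitian_of_isSymm hWsymm
  obtain ⟨V, hV, hWdec⟩ := specData hWh
  obtain ⟨Wstar, hWstardef⟩ : ∃ Ws, Ws = Xstar - η • grad Xstar := ⟨_, rfl⟩
  have hWstar_eq : Wstar = Xstar + η • M := by rw [hWstardef, hM0]; module
  obtain ⟨δ, hδdef⟩ : ∃ d, d = frobNorm (W - Wstar) := ⟨_, rfl⟩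
  have hδ0 : 0 ≤ δ := by rw [hδdef]; exact frobNorm_nonneg _
  -- perturbation bound
  have hpos1 : (0 : ℝ) < 1 + η * β := by positivity
  have hδle : δ ≤ (1 + η * β) * frobNorm (X - Xstar) := by
    have hid : W - Wstar = (X - Xstar) + η • (grad Xstar - grad X) := by
      rw [hWdef, hWstardef]; module
    rw [hδdef, hid]
    calc frobNorm ((X - Xstar) + η • (grad Xstar - grad X))
        ≤ frobNorm (X - Xstar) + frobNorm (η • (grad Xstar - grad X)) := frobNorm_add_le _ _
    _ = frobNorm (X - Xstar) + η * frobNorm (grad Xstar - grad X) := by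
        rw [frobNorm_smul η (le_of_lt hη)]
    _ ≤ frobNorm (X - Xstar) + η * (β * frobNorm (Xstar - X)) := by
        have h := hsmooth Xstar X hXstarMem.1 hXF.1
        nlinarith
    _ = (1 + η * β) * frobNorm (X - Xstar) := by
        rw [frobNorm_sub_comm Xstar X]; ring
  have hδG : 2 * δ ≤ η * G := by
    have h1 : (1 + η * β) * frobNorm (X - Xstar) ≤ (1 + η * β) * (η * G / (2 * (1 + η * β))) :=
      mul_le_mul_of_nonneg_left hdist (le_of_lt hpos1)
    have h2 : (1 + η * β) * (η * G / (2 * (1 + η * β))) = η * G / 2 := by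
      field_simp
    rw [h2] at h1
    linarith
  obtain ⟨θpp, hθppdef⟩ : ∃ t, t = η * eigval M k - δ := ⟨_, rfl⟩
  obtain ⟨c₀, hc₀def⟩ : ∃ c, c = η * eigval M (r' + 1) + δ := ⟨_, rfl⟩
  have hc0 : c₀ ≤ θpp := by
    rw [hc₀def, hθppdef]
    have h3 : η * G = η * eigval M k - η * eigval M (r' + 1) := by rw [hGdef]; ring
    linarith
  -- the projection threshold
  obtain ⟨θ, hθ⟩ := exists_theta hn0 hWh.eigenvalues k hkn'
  have hPcF : V * Matrix.diagonal (fun a => clip (hWh.eigenvalues a - θ)) * Vᵀ ∈ Fantope n k :=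
    fantope_diag hV _ (fun a => clip_nonneg _) (fun a => clip_le_one _) hθ
  obtain ⟨hPiF, hPimin⟩ := hPi W
  have hvi1 := proj_vi hPiF hPimin
  have hvi2 : ∀ Z ∈ Fantope n k,
      0 ≤ ip ((V * Matrix.diagonal (fun a => clip (hWh.eigenvalues a - θ)) * Vᵀ) - W)
        (Z - (V * Matrix.diagonal (fun a => clip (hWh.eigenvalues a - θ)) * Vᵀ)) := by
    intro Z hZ
    have h := cand_vi hV hWh.eigenvalues θ hθ Z hZ
    rw [← hWdec] at h
    exact h
  have hPieq : Pi W = V * Matrix.diagonal (fun a => clip (hWh.eigenvalues a - θ)) * Vᵀ :=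
    proj_eq_of_vi hPiF hPcF hvi1 hvi2
  -- spectral data of Xstar
  have hXsh : Xstar.IsHermitian := isHermitian_of_isSymm hXstarMem.1
  obtain ⟨Y, hY, hXdec⟩ := specData hXsh
  obtain ⟨hq01, hqs⟩ := fantope_specData_bounds hY hXdec hXstarMem
  -- (C) : lower bound for the clipped sum at θpp
  have hinterim : ∀ i ∈ Finset.Icc 1 n, 0 < eigval Xstar i →
      θpp + eigval Xstar i ≤ eigval W i := by
    intro i hi hqipos
    have hi' := Finset.mem_Icc.mp hi
    have hq : ∀ v : Fin n → ℝ,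
        (∀ b ∉ Finset.univ.filter (fun b => eigval Xstar i ≤ hXsh.eigenvalues b),
          (Yᵀ *ᵥ v) b = 0) →
        (θpp + eigval Xstar i) * (v ⬝ᵥ v)
          ≤ v ⬝ᵥ ((V * Matrix.diagonal hWh.eigenvalues * Vᵀ) *ᵥ v) := by
      intro v hv
      have hXv : eigval Xstar i * (v ⬝ᵥ v) ≤ v ⬝ᵥ (Xstar *ᵥ v) := by
        conv_rhs => rw [hXdec]
        rw [qf_spec hY, dot_self_coord hY v, Finset.mul_sum]
        apply Finset.sum_le_sum
        intro b _
        by_cases hb : b ∈ Finset.univ.filter (fun b => eigval Xstar i ≤ hXsh.eigenvalues b)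
        · have hqb := (Finset.mem_filter.mp hb).2
          nlinarith [sq_nonneg ((Yᵀ *ᵥ v) b)]
        · rw [hv b hb]
          simp
      have hua : ∀ a, hMh.eigenvalues a < eigval M k → (Uᵀ *ᵥ v) a = 0 := by
        intro a hμa
        rw [coord_col]
        have hvrec : v = Y *ᵥ (Yᵀ *ᵥ v) := (orth_recover hY v).symm
        rw [hvrec, dot_mulVec_left hY, dotProduct]
        apply Finset.sum_eq_zero
        intro b _
        by_cases hcb : (Yᵀ *ᵥ v) b = 0
        · rw [hcb]; ring
        · have hbtop : b ∈ Finset.univ.filter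
              (fun b => eigval Xstar i ≤ hXsh.eigenvalues b) := by
            by_contra hbe
            exact hcb (hv b hbe)
          have hqb : eigval Xstar i ≤ hXsh.eigenvalues b := (Finset.mem_filter.mp hbtop).2
          have hqbpos : 0 < hXsh.eigenvalues b := lt_of_lt_of_le hqipos hqb
          have hyu : (Yᵀ *ᵥ (fun i2 => U i2 a)) b = 0 := by
            rw [coord_col]
            have h1 : Xstar *ᵥ (fun i2 => Y i2 b)
                = hXsh.eigenvalues b • (fun i2 => Y i2 b) := by
              have h1' := mulVec_col hY hXsh.eigenvalues b
              rw [← hXdec] at h1'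
              exact h1'
            have h3 := dot_symm hXstarMem.1 (fun i2 => Y i2 b) (fun i2 => U i2 a)
            rw [h1, smul_dotProduct, hker a hμa, dotProduct_zero] at h3
            rcases mul_eq_zero.mp h3 with h | h
            · exact absurd h (ne_of_gt hqbpos)
            · exact h
          rw [hyu]; ring
      have hMv : eigval M k * (v ⬝ᵥ v) ≤ v ⬝ᵥ (M *ᵥ v) := by
        conv_rhs => rw [hMdec]
        rw [qf_spec hU, dot_self_coord hU v, Finset.mul_sum]
        apply Finset.sum_le_sum
        intro a _
        by_cases hlow : hMh.eigenvalues a < eigval M k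
        · rw [hua a hlow]; simp
        · push_neg at hlow
          nlinarith [sq_nonneg ((Uᵀ *ᵥ v) a)]
      have hWsv : v ⬝ᵥ (Wstar *ᵥ v) = v ⬝ᵥ (Xstar *ᵥ v) + η * (v ⬝ᵥ (M *ᵥ v)) := by
        rw [hWstar_eq, Matrix.add_mulVec, dotProduct_add, Matrix.smul_mulVec,
          dotProduct_smul, smul_eq_mul]
      have hEv := abs_qf_le (W - Wstar) v
      rw [← hδdef] at hEv
      have hWv : v ⬝ᵥ (W *ᵥ v) = v ⬝ᵥ (Wstar *ᵥ v) + v ⬝ᵥ ((W - Wstar) *ᵥ v) := by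
        rw [Matrix.sub_mulVec, dotProduct_sub]; ring
      have hvv : 0 ≤ v ⬝ᵥ v := by
        rw [dot_self_coord hU v]
        exact Finset.sum_nonneg fun a _ => sq_nonneg _
      have habs := (abs_le.mp hEv).1
      have hMv' := mul_le_mul_of_nonneg_left hMv (le_of_lt hη)
      rw [← hWdec, hWv, hWsv]
      nlinarith [hθppdef]
    have hcnt := qcount_ge hV hWh.eigenvalues Yᵀ
      (Finset.univ.filter (fun b => eigval Xstar i ≤ hXsh.eigenvalues b))
      (θpp + eigval Xstar i) hq
    have hAcard : i ≤ (Finset.univ.filter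
        (fun b => eigval Xstar i ≤ hXsh.eigenvalues b)).card :=
      count_ge_eigval hXsh hi'.1 hi'.2
    exact eigval_ge_of_count hWh hi'.1 hi'.2 (le_trans hAcard hcnt)
  have hC : (k : ℝ) ≤ ∑ a, clip (hWh.eigenvalues a - θpp) := by
    have h1 : ∑ a, clip (hWh.eigenvalues a - θpp)
        = ∑ i ∈ Finset.Icc 1 n, clip (eigval W i - θpp) :=
      (sum_eigval hWh (fun x => clip (x - θpp))).symm
    have h2 : ∑ i ∈ Finset.Icc 1 n, eigval Xstar i = (k : ℝ) := by
      have h := sum_eigval hXsh (fun x => x)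
      rw [h, hqs]
    rw [h1, ← h2]
    apply Finset.sum_le_sum
    intro i hi
    have hi' := Finset.mem_Icc.mp hi
    rcases le_or_gt (eigval Xstar i) 0 with hq0 | hq0
    · exact le_trans hq0 (clip_nonneg _)
    · have hle := hinterim i hi hq0
      have hb1 : eigval Xstar i ≤ 1 := by
        rw [eigval_eq hXsh hi'.1 hi'.2]
        exact (hq01 _).2
      exact clip_ge (le_of_lt hq0) hb1 (by linarith)
  -- (B) : positive clipped entries have eigenvalue above θpp
  have hB : ∀ a, clip (hWh.eigenvalues a - θ) ≠ 0 → θpp < hWh.eigenvalues a := by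
    intro a hpa
    have h1 : 0 < hWh.eigenvalues a - θ := clip_pos_arg hpa
    rcases le_or_gt θpp θ with hcmp | hcmp
    · linarith
    · have hmono : ∀ c ∈ Finset.univ,
          clip (hWh.eigenvalues c - θpp) ≤ clip (hWh.eigenvalues c - θ) :=
        fun c _ => clip_mono (by linarith)
      have hd0 : ∑ c, (clip (hWh.eigenvalues c - θ) - clip (hWh.eigenvalues c - θpp)) = 0 := by
        apply le_antisymm
        · rw [Finset.sum_sub_distrib, hθ]
          linarith
        · exact Finset.sum_nonneg fun c hc => by linarith [hmono c hc]
      have heq := (Finset.sum_eq_zero_iff_of_nonneg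
        (fun c hc => by linarith [hmono c hc])).mp hd0 a (Finset.mem_univ a)
      have heq2 : clip (hWh.eigenvalues a - θpp) = clip (hWh.eigenvalues a - θ) := by linarith
      have hne : clip (hWh.eigenvalues a - θpp) ≠ 0 := by
        rw [heq2]
        exact hpa
      have h4 := clip_pos_arg hne
      linarith
  -- (A) : few eigenvalues of W exceed c₀
  have hAcount : (Finset.univ.filter fun a => c₀ < hWh.eigenvalues a).card ≤ r' := by
    have hgtcard := count_gt_eigval hMh (show 1 ≤ r' + 1 by omega) hr'n
    have hcompl := Finset.card_filter_add_card_filter_not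
      (s := (Finset.univ : Finset (Fin n)))
      (p := fun a => hMh.eigenvalues a ≤ eigval M (r' + 1))
    have hcongr : (Finset.univ.filter fun a => ¬ hMh.eigenvalues a ≤ eigval M (r' + 1))
        = Finset.univ.filter fun a => eigval M (r' + 1) < hMh.eigenvalues a := by
      refine Finset.filter_congr fun a _ => by simp [not_le]
    rw [hcongr] at hcompl
    simp only [Finset.card_univ, Fintype.card_fin] at hcompl
    have hqle : ∀ v : Fin n → ℝ,
        (∀ b ∉ Finset.univ.filter (fun a => hMh.eigenvalues a ≤ eigval M (r' + 1)),
          (Uᵀ *ᵥ v) b = 0) →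
        v ⬝ᵥ ((V * Matrix.diagonal hWh.eigenvalues * Vᵀ) *ᵥ v) ≤ c₀ * (v ⬝ᵥ v) := by
      intro v hv
      have hXv0 : Xstar *ᵥ v = 0 := by
        conv_lhs => rw [(orth_recover hU v).symm]
        rw [Matrix.mulVec_mulVec]
        funext i
        rw [Matrix.mulVec, dotProduct]
        apply Finset.sum_eq_zero
        intro a _
        by_cases hal : a ∈ Finset.univ.filter
            (fun a => hMh.eigenvalues a ≤ eigval M (r' + 1))
        · have hμa : hMh.eigenvalues a ≤ eigval M (r' + 1) := (Finset.mem_filter.mp hal).2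
          have hlt : hMh.eigenvalues a < eigval M k := lt_of_le_of_lt hμa hgap'
          rw [mul_col, hker a hlt]
          simp
        · rw [hv a hal]; ring
      have hXqf : v ⬝ᵥ (Xstar *ᵥ v) = 0 := by rw [hXv0]; simp
      have hMv : v ⬝ᵥ (M *ᵥ v) ≤ eigval M (r' + 1) * (v ⬝ᵥ v) := by
        conv_lhs => rw [hMdec]
        rw [qf_spec hU, dot_self_coord hU v, Finset.mul_sum]
        apply Finset.sum_le_sum
        intro a _
        by_cases hal : a ∈ Finset.univ.filter
            (fun a => hMh.eigenvalues a ≤ eigval M (r' + 1))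
        · have hμa : hMh.eigenvalues a ≤ eigval M (r' + 1) := (Finset.mem_filter.mp hal).2
          nlinarith [sq_nonneg ((Uᵀ *ᵥ v) a)]
        · rw [hv a hal]; simp
      have hWsv : v ⬝ᵥ (Wstar *ᵥ v) = v ⬝ᵥ (Xstar *ᵥ v) + η * (v ⬝ᵥ (M *ᵥ v)) := by
        rw [hWstar_eq, Matrix.add_mulVec, dotProduct_add, Matrix.smul_mulVec,
          dotProduct_smul, smul_eq_mul]
      have hEv := abs_qf_le (W - Wstar) v
      rw [← hδdef] at hEv
      have hWv : v ⬝ᵥ (W *ᵥ v) = v ⬝ᵥ (Wstar *ᵥ v) + v ⬝ᵥ ((W - Wstar) *ᵥ v) := by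
        rw [Matrix.sub_mulVec, dotProduct_sub]; ring
      have hvv : 0 ≤ v ⬝ᵥ v := by
        rw [dot_self_coord hU v]
        exact Finset.sum_nonneg fun a _ => sq_nonneg _
      have habs := (abs_le.mp hEv).2
      have hMv' := mul_le_mul_of_nonneg_left hMv (le_of_lt hη)
      rw [← hWdec, hWv, hWsv, hXqf]
      nlinarith [hc₀def]
    have hcl := qcount_le hV hWh.eigenvalues Uᵀ
      (Finset.univ.filter (fun a => hMh.eigenvalues a ≤ eigval M (r' + 1))) c₀ hqle
    omega
  -- put everything together
  have hsub : (Finset.univ.filter fun a => clip (hWh.eigenvalues a - θ) ≠ 0)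
      ⊆ Finset.univ.filter fun a => c₀ < hWh.eigenvalues a := by
    intro a ha
    have hpa := (Finset.mem_filter.mp ha).2
    have h1 := hB a hpa
    simp only [Finset.mem_filter, Finset.mem_univ, true_and]
    linarith
  rw [← hWdef, hPieq]
  exact le_trans (rank_diag_le hV _)
    (le_trans (Finset.card_le_card hsub) hAcount)
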